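/- Let (Y, τ) be a topological space and d : Y × Y → [0, +∞] lower semicontinuous with respect to the product topology, and suppose that for every y ∈ Y and every s ∈ [0, ∞) the set {ζ ∈ Y : d(y, ζ) ≤ s} is τ-compact. Let Λ ⊆ Y be nonempty and τ-closed, let u : Y → ℝ be bounded and τ-continuous, let L > 0, and set M := sup_{Λ} u. Then for every y ∈ Y the infimum defining ū(y) := min( M, inf_{ζ ∈ Λ} ( u(ζ) + L·d(y, ζ) ) ) (computed in the extended reals) is attained: there exists ζ ∈ Λ with ū(y) = min( M, u(ζ) + L·d(y, ζ) ). -/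

import Mathlib

open scoped ENNReal
open Topology Filter
open scoped NNReal

/-- **Attainment of the infimum in the constrained McShane extension along a lower
semicontinuous extended distance with compact sublevel sets.**  For `Λ` nonempty closed,
`u` bounded continuous, `L > 0`, and `M := sup_Λ u`, the extended-real infimum defining
`ū(y) = min(M, inf_{ζ ∈ Λ} (u ζ + L·d(y, ζ)))` is attained at some `ζ ∈ Λ`. -/
theorem mcshane_infimum_attained
    {Y : Type*} [TopologicalSpace Y]
    (d : Y → Y → ℝ≥0∞)
    (hd : LowerSemicontinuous fun p : Y × Y => d p.1 p.2)
    (hcomp : ∀ y : Y, ∀ s : ℝ≥0∞, s ≠ ⊤ → IsCompact {ζ | d y ζ ≤ s})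
    (Λ : Set Y) (hΛne : Λ.Nonempty) (hΛcl : IsClosed Λ)
    (u : Y → ℝ) (hu : Continuous u) (hub : ∃ C : ℝ, ∀ y, |u y| ≤ C)
    (L : ℝ) (hL : 0 < L) :
    ∀ y : Y, ∃ ζ ∈ Λ,
      min (⨆ ξ ∈ Λ, (u ξ : EReal))
          (⨅ ξ ∈ Λ, ((u ξ : EReal) + (L : EReal) * ((d y ξ : ℝ≥0∞) : EReal))) =
        min (⨆ ξ ∈ Λ, (u ξ : EReal))
          ((u ζ : EReal) + (L : EReal) * ((d y ζ : ℝ≥0∞) : EReal)) := by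
  obtain ⟨C, hC⟩ := hub
  intro y
  set f : Y → EReal := fun ζ => (u ζ : EReal) + (L : EReal) * ((d y ζ : ℝ≥0∞) : EReal) with hf
  set M : EReal := ⨆ ξ ∈ Λ, (u ξ : EReal) with hM
  set I : EReal := ⨅ ξ ∈ Λ, f ξ with hI
  -- trivial case : M ≤ I
  rcases le_or_gt M I with hMI | hIM
  · obtain ⟨ζ, hζ⟩ := hΛne
    refine ⟨ζ, hζ, ?_⟩
    have h1 : I ≤ f ζ := iInf₂_le ζ hζ
    rw [min_eq_left hMI, min_eq_left (hMI.trans h1)]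
  -- main case : I < M
  have hfl : ∀ ζ, (-C : EReal) ≤ f ζ := by
    intro ζ
    have h1 : (-C : ℝ) ≤ u ζ := neg_le_of_abs_le (hC ζ)
    have h2 : (0 : EReal) ≤ (L : EReal) * ((d y ζ : ℝ≥0∞) : EReal) :=
      mul_nonneg (by exact_mod_cast hL.le) (EReal.coe_ennreal_nonneg _)
    calc ((-C : ℝ) : EReal) ≤ (u ζ : EReal) := by exact_mod_cast h1
      _ ≤ f ζ := le_add_of_nonneg_right h2
  have hIbot : ((-C : ℝ) : EReal) ≤ I := le_iInf₂ fun ζ _ => hfl ζ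
  have hMtop : M < ⊤ := by
    refine lt_of_le_of_lt (iSup₂_le fun ξ _ => ?_) (EReal.coe_lt_top C)
    exact_mod_cast le_of_abs_le (hC ξ)
  have hItop : I < ⊤ := hIM.trans hMtop
  have hIbot' : (⊥ : EReal) < I := lt_of_lt_of_le (by exact EReal.bot_lt_coe _) hIbot
  set r : ℝ := I.toReal with hr
  have hIr : I = (r : EReal) := (EReal.coe_toReal hItop.ne hIbot'.ne').symm
  -- lower semicontinuity of f
  have hmul : ∀ ζ, (L : EReal) * ((d y ζ : ℝ≥0∞) : EReal)
      = ((ENNReal.ofReal L * d y ζ : ℝ≥0∞) : EReal) := fun ζ => by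
    rw [EReal.coe_ennreal_mul, EReal.coe_ennreal_ofReal, max_eq_left hL.le]
  have hdy : LowerSemicontinuous fun ζ => d y ζ :=
    hd.comp (Continuous.prodMk_right y)
  have hg : LowerSemicontinuous fun ζ => ((ENNReal.ofReal L * d y ζ : ℝ≥0∞) : EReal) := by
    have h1 : LowerSemicontinuous fun ζ => ENNReal.ofReal L * d y ζ :=
      (ENNReal.continuous_const_mul ENNReal.ofReal_ne_top).comp_lowerSemicontinuous hdy
        (fun a b hab => mul_le_mul_right hab _)
    exact continuous_coe_ennreal_ereal.comp_lowerSemicontinuous h1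
      (fun a b hab => EReal.coe_ennreal_le_coe_ennreal_iff.mpr hab)
  have hflsc : LowerSemicontinuous f := by
    have h1 : LowerSemicontinuous fun ζ => (u ζ : EReal) :=
      ((continuous_coe_real_ereal).comp hu).lowerSemicontinuous
    have h2 : LowerSemicontinuous fun ζ =>
        (u ζ : EReal) + ((ENNReal.ofReal L * d y ζ : ℝ≥0∞) : EReal) := by
      refine h1.add' hg fun x => ?_
      exact EReal.continuousAt_add (Or.inl (EReal.coe_ne_top _)) (Or.inl (EReal.coe_ne_bot _))
    convert h2 using 2 with ζ
    rw [hf]; simp only [hmul ζ]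
  -- key distance bound
  have key : ∀ ζ, ∀ c : ℝ, f ζ ≤ (c : EReal) → d y ζ ≤ ENNReal.ofReal ((c + C) / L) := by
    intro ζ c hle
    have hne : d y ζ ≠ ⊤ := by
      intro htop
      rw [hf] at hle
      simp only [htop, EReal.coe_ennreal_top] at hle
      rw [EReal.mul_top_of_pos (by exact_mod_cast hL),
        EReal.add_top_of_ne_bot (EReal.coe_ne_bot _)] at hle
      exact (EReal.coe_lt_top c).not_ge hle
    obtain ⟨D, hD⟩ : ∃ D : ℝ≥0, d y ζ = D :=
      ⟨(d y ζ).toNNReal, (ENNReal.coe_toNNReal hne).symm⟩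
    rw [hf] at hle
    simp only [hD, EReal.coe_nnreal_eq_coe_real] at hle
    rw [hD]
    have hle' : u ζ + L * (D : ℝ) ≤ c := by exact_mod_cast hle
    have hDle : (D : ℝ) ≤ (c + C) / L := by
      rw [le_div_iff₀ hL]
      have := neg_le_of_abs_le (hC ζ)
      nlinarith [this]
    calc ((D : ℝ≥0) : ℝ≥0∞) = ENNReal.ofReal (D : ℝ) := ENNReal.ofReal_coe_nnreal.symm
      _ ≤ ENNReal.ofReal ((c + C) / L) := ENNReal.ofReal_le_ofReal hDle
  -- the sublevel sets
  set A : ℕ → Set Y := fun n => {ζ ∈ Λ | f ζ ≤ ((r + 1 / (n + 1) : ℝ) : EReal)} with hA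
  have hAne : ∀ n, (A n).Nonempty := by
    intro n
    have hlt : I < ((r + 1 / (n + 1) : ℝ) : EReal) := by
      rw [hIr]
      exact_mod_cast lt_add_of_pos_right r (by positivity)
    obtain ⟨ζ, hζΛ, hζlt⟩ : ∃ ζ ∈ Λ, f ζ < ((r + 1 / (n + 1) : ℝ) : EReal) := by
      by_contra h
      push_neg at h
      exact absurd (le_iInf₂ h) (not_le.mpr hlt)
    exact ⟨ζ, hζΛ, hζlt.le⟩
  have hAcl : ∀ n, IsClosed (A n) :=
    fun n => hΛcl.inter (hflsc.isClosed_preimage _)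
  have hAcomp : ∀ n, IsCompact (A n) := by
    intro n
    refine (hcomp y (ENNReal.ofReal ((r + 1 + C) / L)) ENNReal.ofReal_ne_top).of_isClosed_subset
      (hAcl n) ?_
    rintro ζ ⟨hζΛ, hζle⟩
    refine key ζ (r + 1) (hζle.trans ?_)
    have h1 : (1 : ℝ) / (n + 1) ≤ 1 := by
      rw [div_le_one (by positivity)]
      linarith [Nat.cast_nonneg (α := ℝ) n]
    exact_mod_cast add_le_add_right h1 r
  have hAanti : Antitone A := by
    intro m n hmn ζ hζ
    refine ⟨hζ.1, hζ.2.trans ?_⟩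
    have h1 : (1 : ℝ) / (n + 1) ≤ 1 / (m + 1) := by
      apply one_div_le_one_div_of_le (by positivity)
      have := Nat.cast_le (α := ℝ).mpr hmn
      linarith
    exact_mod_cast add_le_add_right h1 r
  obtain ⟨ζ₀, hζ₀⟩ := IsCompact.nonempty_iInter_of_directed_nonempty_isCompact_isClosed
    A hAanti.directed_ge hAne hAcomp hAcl
  rw [Set.mem_iInter] at hζ₀
  have hζ₀Λ : ζ₀ ∈ Λ := (hζ₀ 0).1
  have hle : f ζ₀ ≤ I := by
    rw [hIr]
    have htend : Filter.Tendsto (fun n : ℕ => ((r + 1 / (n + 1) : ℝ) : EReal))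
        Filter.atTop (𝓝 ((r : ℝ) : EReal)) := by
      rw [EReal.tendsto_coe]
      have h0 : Filter.Tendsto (fun n : ℕ => r + 1 / (n + 1)) Filter.atTop (𝓝 (r + 0)) :=
        tendsto_const_nhds.add tendsto_one_div_add_atTop_nhds_zero_nat
      simpa using h0
    exact ge_of_tendsto' htend fun n => (hζ₀ n).2
  have hEq : f ζ₀ = I := le_antisymm hle (iInf₂_le ζ₀ hζ₀Λ)
  exact ⟨ζ₀, hζ₀Λ, by rw [← hEq]⟩
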